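/- arXiv:1806.07332 — 6 statements merged into one kernel-verified Lean document; each statement's English description precedes it below -/
import Mathlib

section
/- If $\Phi$ and $\Theta$ are detection-incoherent quantum channels, then their tensor product $\Phi\otimes\Theta$ is detection-incoherent, where the dephasing on a composite system is the tensor product of the dephasings on the factors. -/
open Matrix
open scoped ComplexOrder

noncomputable def deph {ι : Type} [Fintype ι] [DecidableEq ι] :
    Matrix ι ι ℂ →ₗ[ℂ] Matrix ι ι ℂ where
  toFun ρ := Matrix.diagonal fun i => ρ i i
  map_add' ρ σ := by
    ext i j
    by_cases h : i = j <;> simp [Matrix.diagonal_apply, h]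
  map_smul' c ρ := by
    ext i j
    by_cases h : i = j <;> simp [Matrix.diagonal_apply, h]

def IsKrausChannel {ι κ : Type} [Fintype ι] [DecidableEq ι] [Fintype κ] [DecidableEq κ]
    (Φ : Matrix ι ι ℂ →ₗ[ℂ] Matrix κ κ ℂ) : Prop :=
  ∃ (N : ℕ) (K : Fin N → Matrix κ ι ℂ),
    (∀ ρ, Φ ρ = ∑ n, K n * ρ * (K n)ᴴ) ∧ (∑ n, (K n)ᴴ * K n = 1)

/-- Detection-incoherent: `Δ ∘ Φ = Δ ∘ Φ ∘ Δ`. -/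
def IsDI {ι κ : Type} [Fintype ι] [DecidableEq ι] [Fintype κ] [DecidableEq κ]
    (Φ : Matrix ι ι ℂ →ₗ[ℂ] Matrix κ κ ℂ) : Prop :=
  LinearMap.comp deph Φ = LinearMap.comp deph (LinearMap.comp Φ deph)

/-- Tensor product of linear maps on matrix spaces (Kronecker form). -/
noncomputable def tensorLinMap {ι₁ ι₂ κ₁ κ₂ : Type}
    [Fintype ι₁] [DecidableEq ι₁] [Fintype ι₂] [DecidableEq ι₂]
    [Fintype κ₁] [DecidableEq κ₁] [Fintype κ₂] [DecidableEq κ₂]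
    (Φ : Matrix ι₁ ι₁ ℂ →ₗ[ℂ] Matrix κ₁ κ₁ ℂ)
    (Ψ : Matrix ι₂ ι₂ ℂ →ₗ[ℂ] Matrix κ₂ κ₂ ℂ) :
    Matrix (ι₁ × ι₂) (ι₁ × ι₂) ℂ →ₗ[ℂ] Matrix (κ₁ × κ₂) (κ₁ × κ₂) ℂ where
  toFun ρ := Matrix.of fun p q =>
    ∑ i, ∑ j, ∑ k, ∑ l, ρ (i, k) (j, l) *
      (Φ (Matrix.single i j 1) p.1 q.1 * Ψ (Matrix.single k l 1) p.2 q.2)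
  map_add' ρ σ := by
    ext p q
    simp [Matrix.add_apply, add_mul, Finset.sum_add_distrib]
  map_smul' c ρ := by
    ext p q
    simp [Matrix.smul_apply, smul_eq_mul, Finset.mul_sum, mul_assoc]

lemma di_offdiag {ι κ : Type} [Fintype ι] [DecidableEq ι] [Fintype κ] [DecidableEq κ]
    {Φ : Matrix ι ι ℂ →ₗ[ℂ] Matrix κ κ ℂ} (h : IsDI Φ) {i j : ι} (hij : i ≠ j) (p : κ) :
    Φ (Matrix.single i j 1) p p = 0 := by
  have h2 := LinearMap.congr_fun h (Matrix.single i j 1)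
  have hd : deph (Matrix.single i j 1) = 0 := by
    ext x y
    by_cases hxy : x = y <;>
      simp [deph, Matrix.diagonal_apply, Matrix.single, hxy]
    rintro rfl rfl; exact hij rfl
  simp only [LinearMap.comp_apply, hd, map_zero] at h2
  have := congrFun (congrFun h2 p) p
  simpa [deph, Matrix.diagonal_apply, Matrix.zero_apply] using this

theorem stmt3 {a b c d : ℕ}
    (Φ : Matrix (Fin a) (Fin a) ℂ →ₗ[ℂ] Matrix (Fin b) (Fin b) ℂ)
    (Θ : Matrix (Fin c) (Fin c) ℂ →ₗ[ℂ] Matrix (Fin d) (Fin d) ℂ)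
    (hΦc : IsKrausChannel Φ) (hΘc : IsKrausChannel Θ)
    (hΦ : IsDI Φ) (hΘ : IsDI Θ) :
    IsDI (tensorLinMap Φ Θ) := by
  unfold IsDI
  apply LinearMap.ext
  intro ρ
  ext p q
  by_cases hpq : p = q
  · subst hpq
    simp only [LinearMap.comp_apply, deph, LinearMap.coe_mk, AddHom.coe_mk,
      Matrix.diagonal_apply_eq, tensorLinMap, Matrix.of_apply]
    refine Finset.sum_congr rfl fun i _ => Finset.sum_congr rfl fun j _ =>
      Finset.sum_congr rfl fun k _ => Finset.sum_congr rfl fun l _ => ?_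
    by_cases hij : i = j
    · subst hij
      by_cases hkl : k = l
      · subst hkl
        simp [Matrix.diagonal_apply]
      · simp [di_offdiag hΘ hkl, Matrix.diagonal_apply, hkl]
    · have : ¬ ((i, k) = (j, l)) := by simp [hij]
      simp [di_offdiag hΦ hij, Matrix.diagonal_apply, this]
  · simp [LinearMap.comp_apply, deph, Matrix.diagonal_apply, hpq]
end

section
/- A completely positive trace-preserving map $\Phi$ with coefficients $\Phi^{b,d}_{a,c}$ defined by $\Phi(|b\rangle\langle d|)=\sum_{a,c}\Phi^{b,d}_{a,c}|a\rangle\langle c|$ is detection-incoherent ($\Delta\Phi=\Delta\Phi\Delta$) if and only if $\Phi^{b,d}_{a,a} = p(a|b)\,\delta_{b,d}$ for all $a,b,d$, where $p(a|b)=\Phi^{b,b}_{a,a}$ is a stochastic matrix (nonnegative with $\sum_a p(a|b)=1$). -/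
open Matrix
open scoped ComplexOrder

lemma deph_apply {ι : Type} [Fintype ι] [DecidableEq ι] (ρ : Matrix ι ι ℂ) (i j : ι) :
    deph ρ i j = if i = j then ρ i i else 0 := by
  simp [deph, Matrix.diagonal_apply]

lemma deph_std {ι : Type} [Fintype ι] [DecidableEq ι] (b d : ι) :
    deph (Matrix.single b d (1:ℂ)) = if b = d then Matrix.single b b (1:ℂ) else 0 := by
  ext i j
  by_cases h : b = d <;> by_cases h2 : i = j <;>
    simp [deph_apply, Matrix.single, h, h2, ite_and] <;> aesop

lemma entry_sum {n m : ℕ} (Φ : Matrix (Fin n) (Fin n) ℂ →ₗ[ℂ] Matrix (Fin m) (Fin m) ℂ)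
    (σ : Matrix (Fin n) (Fin n) ℂ) (a a' : Fin m) :
    Φ σ a a' = ∑ b, ∑ d, σ b d * Φ (Matrix.single b d 1) a a' := by
  conv_lhs => rw [matrix_eq_sum_single σ]
  simp only [map_sum]
  rw [Matrix.sum_apply]
  refine Finset.sum_congr rfl fun b _ => ?_
  rw [Matrix.sum_apply]
  refine Finset.sum_congr rfl fun d _ => ?_
  have hsb : Matrix.single b d (σ b d) = σ b d • Matrix.single b d (1:ℂ) := by
    rw [smul_single, smul_eq_mul, mul_one]
  rw [hsb, _root_.map_smul, Matrix.smul_apply, smul_eq_mul]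

lemma isDI_iff {n m : ℕ} (Φ : Matrix (Fin n) (Fin n) ℂ →ₗ[ℂ] Matrix (Fin m) (Fin m) ℂ) :
    IsDI Φ ↔ ∀ (a : Fin m) (b d : Fin n),
      Φ (Matrix.single b d 1) a a =
        if b = d then Φ (Matrix.single b b 1) a a else 0 := by
  constructor
  · intro h a b d
    have h1 := LinearMap.ext_iff.mp h (Matrix.single b d 1)
    have h2 := congrFun (congrFun h1 a) a
    simp only [LinearMap.comp_apply] at h2
    rw [deph_apply, deph_apply, if_pos rfl, if_pos rfl, deph_std] at h2
    by_cases hbd : b = d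
    · rw [if_pos hbd] at h2; rw [if_pos hbd, h2]
    · rw [if_neg hbd] at h2; rw [if_neg hbd, h2]; simp
  · intro h
    apply LinearMap.ext
    intro ρ
    ext i j
    simp only [LinearMap.comp_apply]
    by_cases hij : i = j
    · subst hij
      rw [deph_apply, deph_apply, if_pos rfl, if_pos rfl]
      rw [entry_sum Φ ρ i i, entry_sum Φ (deph ρ) i i]
      refine Finset.sum_congr rfl fun b _ => Finset.sum_congr rfl fun d _ => ?_
      rw [h i b d, deph_apply ρ b d]
      by_cases hbd : b = d
      · subst hbd; rw [if_pos rfl, if_pos rfl, h i b b, if_pos rfl]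
      · rw [if_neg hbd, if_neg hbd, zero_mul, mul_zero]
    · rw [deph_apply, deph_apply, if_neg hij, if_neg hij]

lemma kraus_entry {n m : ℕ} {N : ℕ} (K : Fin N → Matrix (Fin m) (Fin n) ℂ)
    (a : Fin m) (b d : Fin n) :
    (∑ k, K k * Matrix.single b d (1:ℂ) * (K k)ᴴ) a a = ∑ k, K k a b * star (K k a d) := by
  rw [Matrix.sum_apply]
  refine Finset.sum_congr rfl fun k _ => ?_
  simp only [Matrix.mul_apply, Matrix.single, of_apply, conjTranspose_apply, ite_and,
    ite_mul, one_mul, zero_mul, Finset.sum_ite_eq, Finset.mem_univ, if_true, mul_ite, mul_zero,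
    Finset.sum_ite_eq', mul_one]

theorem stmt6 {n m : ℕ}
    (Φ : Matrix (Fin n) (Fin n) ℂ →ₗ[ℂ] Matrix (Fin m) (Fin m) ℂ)
    (hΦ : IsKrausChannel Φ) :
    IsDI Φ ↔
    ∃ p : Fin m → Fin n → ℝ, (∀ a b, 0 ≤ p a b) ∧ (∀ b, ∑ a, p a b = 1) ∧
      (∀ (a : Fin m) (b d : Fin n),
        Φ (Matrix.single b d 1) a a = if b = d then (p a b : ℂ) else 0) := by
  obtain ⟨N, K, hK, hK1⟩ := hΦ
  have hdiag : ∀ (a : Fin m) (b : Fin n),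
      Φ (Matrix.single b b 1) a a = ∑ k, K k a b * star (K k a b) := by
    intro a b
    rw [hK, kraus_entry]
  have hre : ∀ (a : Fin m) (b : Fin n),
      Φ (Matrix.single b b 1) a a = ((∑ k, Complex.normSq (K k a b) : ℝ) : ℂ) := by
    intro a b
    rw [hdiag]
    push_cast
    refine Finset.sum_congr rfl fun k _ => ?_
    simp [Complex.star_def, Complex.mul_conj]
  rw [isDI_iff]
  constructor
  · intro h
    refine ⟨fun a b => ∑ k, Complex.normSq (K k a b), ?_, ?_, ?_⟩
    · intro a b
      exact Finset.sum_nonneg fun k _ => Complex.normSq_nonneg _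
    · intro b
      have := congrFun (congrFun hK1 b) b
      rw [Matrix.sum_apply] at this
      simp only [Matrix.mul_apply, conjTranspose_apply, Matrix.one_apply_eq] at this
      have h2 : (((∑ a, ∑ k, Complex.normSq (K k a b) : ℝ)) : ℂ) = 1 := by
        rw [← this]
        push_cast
        rw [Finset.sum_comm]
        refine Finset.sum_congr rfl fun k _ => Finset.sum_congr rfl fun a _ => ?_
        rw [Complex.normSq_eq_conj_mul_self]
        norm_num
      exact_mod_cast h2
    · intro a b d
      rw [h a b d]
      by_cases hbd : b = d
      · subst hbd; rw [if_pos rfl, if_pos rfl, hre]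
      · rw [if_neg hbd, if_neg hbd]
  · rintro ⟨p, hp0, hp1, hp⟩ a b d
    rw [hp a b d]
    by_cases hbd : b = d
    · subst hbd; rw [if_pos rfl, if_pos rfl, hp a b b, if_pos rfl]
    · rw [if_neg hbd, if_neg hbd]
end

section
/- Let $\|\cdot\|$ be a norm on linear maps between matrix spaces that is sub-multiplicative under composition, sub-multiplicative under tensor products, and satisfies $\|\Phi\|\leq 1$ for every detection-incoherent channel $\Phi$. Then the functional $M(\Theta)=\min_{\Phi\in\mathcal{DI}}\|\Delta\Theta-\Delta\Phi\|$ is monotone under right composition with detection-incoherent channels: $M(\Theta\circ\tilde\Phi)\leq M(\Theta)$ for all channels $\Theta$ and all $\tilde\Phi\in\mathcal{DI}$. -/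
open Matrix
open scoped ComplexOrder

lemma kraus_comp {ι κ τ : Type} [Fintype ι] [DecidableEq ι] [Fintype κ] [DecidableEq κ]
    [Fintype τ] [DecidableEq τ]
    {S : Matrix κ κ ℂ →ₗ[ℂ] Matrix τ τ ℂ} {T : Matrix ι ι ℂ →ₗ[ℂ] Matrix κ κ ℂ}
    (hS : IsKrausChannel S) (hT : IsKrausChannel T) : IsKrausChannel (S.comp T) := by
  obtain ⟨M, L, hL, hL1⟩ := hS
  obtain ⟨N, K, hK, hK1⟩ := hT
  refine ⟨M * N, fun p => L (finProdFinEquiv.symm p).1 * K (finProdFinEquiv.symm p).2, ?_, ?_⟩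
  · intro ρ
    rw [← (finProdFinEquiv (m := M) (n := N)).sum_comp]
    simp only [Equiv.symm_apply_apply, LinearMap.comp_apply, hK, hL, Fintype.sum_prod_type]
    refine Finset.sum_congr rfl fun m _ => ?_
    rw [Matrix.mul_sum, Matrix.sum_mul]
    refine Finset.sum_congr rfl fun n _ => ?_
    simp [Matrix.conjTranspose_mul, Matrix.mul_assoc]
  · rw [← (finProdFinEquiv (m := M) (n := N)).sum_comp]
    simp only [Equiv.symm_apply_apply, Fintype.sum_prod_type]
    rw [Finset.sum_comm]
    calc (∑ n, ∑ m, (L m * K n)ᴴ * (L m * K n))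
        = ∑ n, (K n)ᴴ * (∑ m, (L m)ᴴ * L m) * K n := by
          refine Finset.sum_congr rfl fun n _ => ?_
          rw [Matrix.mul_sum, Matrix.sum_mul]
          refine Finset.sum_congr rfl fun m _ => ?_
          simp [Matrix.conjTranspose_mul, Matrix.mul_assoc]
      _ = 1 := by simp [hL1, hK1]

lemma di_comp {ι κ τ : Type} [Fintype ι] [DecidableEq ι] [Fintype κ] [DecidableEq κ]
    [Fintype τ] [DecidableEq τ]
    {S : Matrix κ κ ℂ →ₗ[ℂ] Matrix τ τ ℂ} {T : Matrix ι ι ℂ →ₗ[ℂ] Matrix κ κ ℂ}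
    (hS : IsDI S) (hT : IsDI T) : IsDI (S.comp T) := by
  have hS' : ∀ σ, deph (S σ) = deph (S (deph σ)) := fun σ => LinearMap.ext_iff.mp hS σ
  have hT' : ∀ ρ, deph (T ρ) = deph (T (deph ρ)) := fun ρ => LinearMap.ext_iff.mp hT ρ
  apply LinearMap.ext
  intro ρ
  simp only [LinearMap.comp_apply]
  rw [hS' (T ρ), hT' ρ, ← hS' (T (deph ρ))]

/-- The "replace with a fixed diagonal state" map. -/
noncomputable def replaceMap {ι κ : Type} [Fintype ι] [DecidableEq ι] [Fintype κ]
    [DecidableEq κ] (o : κ) : Matrix ι ι ℂ →ₗ[ℂ] Matrix κ κ ℂ where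
  toFun ρ := (∑ i, ρ i i) • Matrix.single o o 1
  map_add' ρ σ := by simp [Finset.sum_add_distrib, add_smul]
  map_smul' c ρ := by simp [Matrix.smul_apply, Finset.mul_sum, smul_smul]

lemma stdBasis_conjTranspose {b : ℕ} {κ : Type} [Fintype κ] [DecidableEq κ] (o : κ)
    (n : Fin b) : (Matrix.single o n (1:ℂ))ᴴ = Matrix.single n o (1:ℂ) := by
  ext p q
  simp only [Matrix.conjTranspose_apply, Matrix.single, Matrix.of_apply]
  by_cases h1 : o = q <;> by_cases h2 : n = p <;> simp [h1, h2]

lemma replaceMap_kraus {b : ℕ} {κ : Type} [Fintype κ] [DecidableEq κ] (o : κ) :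
    IsKrausChannel (replaceMap o : Matrix (Fin b) (Fin b) ℂ →ₗ[ℂ] Matrix κ κ ℂ) := by
  refine ⟨b, fun n => Matrix.single o n 1, ?_, ?_⟩
  · intro ρ
    have key : ∀ n : Fin b, Matrix.single o n (1:ℂ) * ρ *
        (Matrix.single o n (1:ℂ))ᴴ = ρ n n • Matrix.single o o (1:ℂ) := by
      intro n
      rw [stdBasis_conjTranspose]
      ext p q
      simp only [Matrix.mul_apply, Matrix.single, Matrix.of_apply, Matrix.smul_apply,
        ite_mul, mul_ite, one_mul, mul_one, zero_mul, mul_zero, smul_eq_mul, ite_and]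
      by_cases hp : o = p <;> by_cases hq : o = q <;>
        simp [hp, hq, Finset.sum_ite_eq, Finset.sum_ite_eq']
    simp only [key, replaceMap, LinearMap.coe_mk, AddHom.coe_mk, ← Finset.sum_smul]
  · have key : ∀ n : Fin b, (Matrix.single o n (1:ℂ))ᴴ * Matrix.single o n (1:ℂ)
        = Matrix.single n n (1:ℂ) := by
      intro n
      rw [stdBasis_conjTranspose]
      ext p q
      simp only [Matrix.mul_apply, Matrix.single, Matrix.of_apply, ite_mul, mul_ite,
        one_mul, zero_mul, mul_zero, mul_one, ite_and]
      by_cases hp : n = p <;> by_cases hq : n = q <;>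
        simp [hp, hq, Finset.sum_ite_eq, Finset.sum_ite_eq']
    simp only [key]
    ext p q
    simp only [Matrix.sum_apply, Matrix.single, Matrix.of_apply, Matrix.one_apply, ite_and]
    by_cases h : p = q <;> simp [h, eq_comm]

lemma replaceMap_di {ι κ : Type} [Fintype ι] [DecidableEq ι] [Fintype κ] [DecidableEq κ]
    (o : κ) : IsDI (replaceMap o : Matrix ι ι ℂ →ₗ[ℂ] Matrix κ κ ℂ) := by
  apply LinearMap.ext
  intro ρ
  simp [replaceMap, deph, LinearMap.comp_apply, Matrix.diagonal_apply]

theorem stmt8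
    (nn : ∀ (ι κ : Type) [Fintype ι] [DecidableEq ι] [Fintype κ] [DecidableEq κ],
      (Matrix ι ι ℂ →ₗ[ℂ] Matrix κ κ ℂ) → ℝ)
    (hnonneg : ∀ (ι κ : Type) [Fintype ι] [DecidableEq ι] [Fintype κ] [DecidableEq κ]
      (T : Matrix ι ι ℂ →ₗ[ℂ] Matrix κ κ ℂ), 0 ≤ nn ι κ T)
    (hdefinite : ∀ (ι κ : Type) [Fintype ι] [DecidableEq ι] [Fintype κ] [DecidableEq κ]
      (T : Matrix ι ι ℂ →ₗ[ℂ] Matrix κ κ ℂ), nn ι κ T = 0 ↔ T = 0)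
    (htriangle : ∀ (ι κ : Type) [Fintype ι] [DecidableEq ι] [Fintype κ] [DecidableEq κ]
      (S T : Matrix ι ι ℂ →ₗ[ℂ] Matrix κ κ ℂ), nn ι κ (S + T) ≤ nn ι κ S + nn ι κ T)
    (hhom : ∀ (ι κ : Type) [Fintype ι] [DecidableEq ι] [Fintype κ] [DecidableEq κ]
      (c : ℂ) (T : Matrix ι ι ℂ →ₗ[ℂ] Matrix κ κ ℂ), nn ι κ (c • T) = ‖c‖ * nn ι κ T)
    (hcomp : ∀ (ι κ τ : Type) [Fintype ι] [DecidableEq ι] [Fintype κ] [DecidableEq κ]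
      [Fintype τ] [DecidableEq τ]
      (S : Matrix κ κ ℂ →ₗ[ℂ] Matrix τ τ ℂ) (T : Matrix ι ι ℂ →ₗ[ℂ] Matrix κ κ ℂ),
      nn ι τ (LinearMap.comp S T) ≤ nn κ τ S * nn ι κ T)
    (htens : ∀ (ι₁ ι₂ κ₁ κ₂ : Type)
      [Fintype ι₁] [DecidableEq ι₁] [Fintype ι₂] [DecidableEq ι₂]
      [Fintype κ₁] [DecidableEq κ₁] [Fintype κ₂] [DecidableEq κ₂]
      (S : Matrix ι₁ ι₁ ℂ →ₗ[ℂ] Matrix κ₁ κ₁ ℂ) (T : Matrix ι₂ ι₂ ℂ →ₗ[ℂ] Matrix κ₂ κ₂ ℂ),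
      nn (ι₁ × ι₂) (κ₁ × κ₂) (tensorLinMap S T) ≤ nn ι₁ κ₁ S * nn ι₂ κ₂ T)
    (hDIbound : ∀ (ι κ : Type) [Fintype ι] [DecidableEq ι] [Fintype κ] [DecidableEq κ]
      (Φ : Matrix ι ι ℂ →ₗ[ℂ] Matrix κ κ ℂ), IsKrausChannel Φ → IsDI Φ → nn ι κ Φ ≤ 1)
    {a b c : ℕ}
    (Θ : Matrix (Fin b) (Fin b) ℂ →ₗ[ℂ] Matrix (Fin c) (Fin c) ℂ)
    (hΘ : IsKrausChannel Θ)
    (Φt : Matrix (Fin a) (Fin a) ℂ →ₗ[ℂ] Matrix (Fin b) (Fin b) ℂ)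
    (hΦt : IsKrausChannel Φt) (hΦtDI : IsDI Φt) :
    sInf {r : ℝ | ∃ Φ : Matrix (Fin a) (Fin a) ℂ →ₗ[ℂ] Matrix (Fin c) (Fin c) ℂ,
        IsKrausChannel Φ ∧ IsDI Φ ∧
        r = nn (Fin a) (Fin c)
          (LinearMap.comp deph (LinearMap.comp Θ Φt) - LinearMap.comp deph Φ)} ≤
    sInf {r : ℝ | ∃ Φ : Matrix (Fin b) (Fin b) ℂ →ₗ[ℂ] Matrix (Fin c) (Fin c) ℂ,
        IsKrausChannel Φ ∧ IsDI Φ ∧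
        r = nn (Fin b) (Fin c) (LinearMap.comp deph Θ - LinearMap.comp deph Φ)} := by
    -- Notation
  set A := {r : ℝ | ∃ Φ : Matrix (Fin a) (Fin a) ℂ →ₗ[ℂ] Matrix (Fin c) (Fin c) ℂ,
        IsKrausChannel Φ ∧ IsDI Φ ∧
        r = nn (Fin a) (Fin c)
          (LinearMap.comp deph (LinearMap.comp Θ Φt) - LinearMap.comp deph Φ)} with hA
  set B := {r : ℝ | ∃ Φ : Matrix (Fin b) (Fin b) ℂ →ₗ[ℂ] Matrix (Fin c) (Fin c) ℂ,
        IsKrausChannel Φ ∧ IsDI Φ ∧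
        r = nn (Fin b) (Fin c) (LinearMap.comp deph Θ - LinearMap.comp deph Φ)} with hB
  have hAbdd : BddBelow A := by
    refine ⟨0, fun x hx => ?_⟩
    obtain ⟨Φ, _, _, rfl⟩ := hx
    exact hnonneg _ _ _
  -- B is nonempty
  have hBne : B.Nonempty := by
    rcases Nat.eq_zero_or_pos c with hc | hc
    · -- c = 0
      rcases Nat.eq_zero_or_pos b with hb | hb
      · -- b = 0 : the zero map is vacuously a Kraus channel
        refine ⟨_, (0 : Matrix (Fin b) (Fin b) ℂ →ₗ[ℂ] Matrix (Fin c) (Fin c) ℂ), ?_, ?_, rfl⟩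
        · refine ⟨0, fun n => n.elim0, fun ρ => by simp, ?_⟩
          ext i j
          exact absurd i.2 (by omega)
        · simp [IsDI]
      · -- b > 0, c = 0 : contradiction with Θ being a channel
        exfalso
        obtain ⟨N, K, _, h1⟩ := hΘ
        have := congrFun (congrFun h1 ⟨0, hb⟩) ⟨0, hb⟩
        have h0 : (∑ n, (K n)ᴴ * K n) (⟨0, hb⟩ : Fin b) ⟨0, hb⟩ = 0 := by
          simp only [Matrix.sum_apply, Matrix.mul_apply]
          apply Finset.sum_eq_zero
          intro n _
          apply Finset.sum_eq_zero
          intro k _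
          exact absurd k.2 (by omega)
        rw [h0] at this
        rw [Matrix.one_apply_eq] at this
        exact zero_ne_one this
    · -- c > 0 : use the replace-with-fixed-state channel
      exact ⟨_, replaceMap ⟨0, hc⟩, replaceMap_kraus _, replaceMap_di _, rfl⟩
  refine le_csInf hBne ?_
  rintro r ⟨Φ, hΦK, hΦDI, rfl⟩
  have hmem : nn (Fin a) (Fin c)
      (LinearMap.comp deph (LinearMap.comp Θ Φt) - LinearMap.comp deph (Φ.comp Φt)) ∈ A := by
    exact ⟨Φ.comp Φt, kraus_comp hΦK hΦt, di_comp hΦDI hΦtDI, rfl⟩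
  refine le_trans (csInf_le hAbdd hmem) ?_
  have hrw : LinearMap.comp deph (LinearMap.comp Θ Φt) - LinearMap.comp deph (Φ.comp Φt)
      = (LinearMap.comp deph Θ - LinearMap.comp deph Φ).comp Φt := by
    rw [LinearMap.sub_comp, LinearMap.comp_assoc, LinearMap.comp_assoc]
  rw [hrw]
  calc nn (Fin a) (Fin c) ((LinearMap.comp deph Θ - LinearMap.comp deph Φ).comp Φt)
      ≤ nn (Fin b) (Fin c) (LinearMap.comp deph Θ - LinearMap.comp deph Φ)
          * nn (Fin a) (Fin b) Φt := hcomp _ _ _ _ _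
    _ ≤ nn (Fin b) (Fin c) (LinearMap.comp deph Θ - LinearMap.comp deph Φ) * 1 := by
        exact mul_le_mul_of_nonneg_left (hDIbound _ _ _ hΦt hΦtDI) (hnonneg _ _ _)
    _ = _ := mul_one _
end

section
/- With the hypotheses of the previous setup, $M(\Theta)=\min_{\Phi\in\mathcal{DI}}\|\Delta\Theta-\Delta\Phi\|$ is also monotone under left composition: $M(\tilde\Phi\circ\Theta)\leq M(\Theta)$ for all channels $\Theta$ and all detection-incoherent channels $\tilde\Phi$. -/
open Matrix
open scoped ComplexOrder

lemma deph_deph_apply {ι : Type} [Fintype ι] [DecidableEq ι] (ρ : Matrix ι ι ℂ) :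
    deph (deph ρ) = deph ρ := by
  ext i j
  by_cases h : i = j <;> simp [deph, Matrix.diagonal_apply, h]

lemma isKrausChannel_deph {ι : Type} [Fintype ι] [DecidableEq ι] :
    IsKrausChannel (deph (ι := ι)) := by
  let e := (Fintype.equivFin ι).symm
  refine ⟨Fintype.card ι, fun n => Matrix.single (e n) (e n) 1, ?_, ?_⟩
  · intro ρ
    have hΔ : deph ρ = Matrix.diagonal fun i => ρ i i := rfl
    rw [Equiv.sum_comp e
      (fun i : ι => Matrix.single i i 1 * ρ * (Matrix.single i i 1)ᴴ), hΔ]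
    symm
    ext p q
    simp only [Matrix.sum_apply, Matrix.mul_apply, Matrix.conjTranspose_apply,
      Matrix.single, Matrix.of_apply, Matrix.diagonal_apply, ite_and]
    by_cases h : p = q <;>
      simp [h, Finset.sum_ite_eq, Finset.sum_ite_eq', apply_ite star, Finset.mul_sum,
        Finset.sum_mul, mul_ite, ite_mul, eq_comm]
  · rw [Equiv.sum_comp e
      (fun i : ι => (Matrix.single i i (1:ℂ))ᴴ * Matrix.single i i 1)]
    ext p q
    simp only [Matrix.sum_apply, Matrix.mul_apply, Matrix.conjTranspose_apply,
      Matrix.single, Matrix.of_apply, Matrix.one_apply, ite_and]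
    by_cases h : p = q <;>
      simp [h, Finset.sum_ite_eq, Finset.sum_ite_eq', apply_ite star, mul_ite, ite_mul, eq_comm]

lemma IsKrausChannel.compKraus {ι κ τ : Type} [Fintype ι] [DecidableEq ι] [Fintype κ]
    [DecidableEq κ] [Fintype τ] [DecidableEq τ]
    {S : Matrix κ κ ℂ →ₗ[ℂ] Matrix τ τ ℂ} {T : Matrix ι ι ℂ →ₗ[ℂ] Matrix κ κ ℂ}
    (hS : IsKrausChannel S) (hT : IsKrausChannel T) :
    IsKrausChannel (LinearMap.comp S T) := by
  obtain ⟨N, K, hK, hK1⟩ := hS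
  obtain ⟨M, L, hL, hL1⟩ := hT
  let e : Fin N × Fin M ≃ Fin (N * M) := finProdFinEquiv
  refine ⟨N * M, fun n => K (e.symm n).1 * L (e.symm n).2, ?_, ?_⟩
  · intro ρ
    rw [Equiv.sum_comp e.symm
      (fun p : Fin N × Fin M => (K p.1 * L p.2) * ρ * (K p.1 * L p.2)ᴴ)]
    rw [Fintype.sum_prod_type]
    simp only [LinearMap.comp_apply, hK, hL]
    refine Finset.sum_congr rfl fun n _ => ?_
    simp only [Matrix.mul_sum, Matrix.sum_mul]
    refine Finset.sum_congr rfl fun m _ => ?_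
    simp only [Matrix.conjTranspose_mul]
    simp only [Matrix.mul_assoc]
  · rw [Equiv.sum_comp e.symm
      (fun p : Fin N × Fin M => (K p.1 * L p.2)ᴴ * (K p.1 * L p.2))]
    rw [Fintype.sum_prod_type_right]
    calc ∑ m, ∑ n, (K n * L m)ᴴ * (K n * L m)
        = ∑ m, (L m)ᴴ * (∑ n, (K n)ᴴ * K n) * L m := by
          refine Finset.sum_congr rfl fun m _ => ?_
          simp only [Matrix.mul_sum, Matrix.sum_mul]
          refine Finset.sum_congr rfl fun n _ => ?_
          simp only [Matrix.conjTranspose_mul]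
          simp only [Matrix.mul_assoc]
      _ = 1 := by simp [hK1, hL1]

lemma IsDI.apply' {ι κ : Type} [Fintype ι] [DecidableEq ι] [Fintype κ] [DecidableEq κ]
    {Φ : Matrix ι ι ℂ →ₗ[ℂ] Matrix κ κ ℂ} (h : IsDI Φ) (ρ : Matrix ι ι ℂ) :
    deph (Φ ρ) = deph (Φ (deph ρ)) :=
  LinearMap.congr_fun h ρ

theorem stmt9
    (nn : ∀ (ι κ : Type) [Fintype ι] [DecidableEq ι] [Fintype κ] [DecidableEq κ],
      (Matrix ι ι ℂ →ₗ[ℂ] Matrix κ κ ℂ) → ℝ)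
    (hnonneg : ∀ (ι κ : Type) [Fintype ι] [DecidableEq ι] [Fintype κ] [DecidableEq κ]
      (T : Matrix ι ι ℂ →ₗ[ℂ] Matrix κ κ ℂ), 0 ≤ nn ι κ T)
    (hdefinite : ∀ (ι κ : Type) [Fintype ι] [DecidableEq ι] [Fintype κ] [DecidableEq κ]
      (T : Matrix ι ι ℂ →ₗ[ℂ] Matrix κ κ ℂ), nn ι κ T = 0 ↔ T = 0)
    (htriangle : ∀ (ι κ : Type) [Fintype ι] [DecidableEq ι] [Fintype κ] [DecidableEq κ]
      (S T : Matrix ι ι ℂ →ₗ[ℂ] Matrix κ κ ℂ), nn ι κ (S + T) ≤ nn ι κ S + nn ι κ T)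
    (hhom : ∀ (ι κ : Type) [Fintype ι] [DecidableEq ι] [Fintype κ] [DecidableEq κ]
      (c : ℂ) (T : Matrix ι ι ℂ →ₗ[ℂ] Matrix κ κ ℂ), nn ι κ (c • T) = ‖c‖ * nn ι κ T)
    (hcomp : ∀ (ι κ τ : Type) [Fintype ι] [DecidableEq ι] [Fintype κ] [DecidableEq κ]
      [Fintype τ] [DecidableEq τ]
      (S : Matrix κ κ ℂ →ₗ[ℂ] Matrix τ τ ℂ) (T : Matrix ι ι ℂ →ₗ[ℂ] Matrix κ κ ℂ),
      nn ι τ (LinearMap.comp S T) ≤ nn κ τ S * nn ι κ T)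
    (htens : ∀ (ι₁ ι₂ κ₁ κ₂ : Type)
      [Fintype ι₁] [DecidableEq ι₁] [Fintype ι₂] [DecidableEq ι₂]
      [Fintype κ₁] [DecidableEq κ₁] [Fintype κ₂] [DecidableEq κ₂]
      (S : Matrix ι₁ ι₁ ℂ →ₗ[ℂ] Matrix κ₁ κ₁ ℂ) (T : Matrix ι₂ ι₂ ℂ →ₗ[ℂ] Matrix κ₂ κ₂ ℂ),
      nn (ι₁ × ι₂) (κ₁ × κ₂) (tensorLinMap S T) ≤ nn ι₁ κ₁ S * nn ι₂ κ₂ T)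
    (hDIbound : ∀ (ι κ : Type) [Fintype ι] [DecidableEq ι] [Fintype κ] [DecidableEq κ]
      (Φ : Matrix ι ι ℂ →ₗ[ℂ] Matrix κ κ ℂ), IsKrausChannel Φ → IsDI Φ → nn ι κ Φ ≤ 1)
    {b c d : ℕ}
    (Θ : Matrix (Fin b) (Fin b) ℂ →ₗ[ℂ] Matrix (Fin c) (Fin c) ℂ)
    (hΘ : IsKrausChannel Θ)
    (Φt : Matrix (Fin c) (Fin c) ℂ →ₗ[ℂ] Matrix (Fin d) (Fin d) ℂ)
    (hΦt : IsKrausChannel Φt) (hΦtDI : IsDI Φt) :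
    sInf {r : ℝ | ∃ Φ : Matrix (Fin b) (Fin b) ℂ →ₗ[ℂ] Matrix (Fin d) (Fin d) ℂ,
        IsKrausChannel Φ ∧ IsDI Φ ∧
        r = nn (Fin b) (Fin d)
          (LinearMap.comp deph (LinearMap.comp Φt Θ) - LinearMap.comp deph Φ)} ≤
    sInf {r : ℝ | ∃ Φ : Matrix (Fin b) (Fin b) ℂ →ₗ[ℂ] Matrix (Fin c) (Fin c) ℂ,
        IsKrausChannel Φ ∧ IsDI Φ ∧
        r = nn (Fin b) (Fin c) (LinearMap.comp deph Θ - LinearMap.comp deph Φ)} := by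
  set A := {r : ℝ | ∃ Φ : Matrix (Fin b) (Fin b) ℂ →ₗ[ℂ] Matrix (Fin d) (Fin d) ℂ,
        IsKrausChannel Φ ∧ IsDI Φ ∧
        r = nn (Fin b) (Fin d)
          (LinearMap.comp deph (LinearMap.comp Φt Θ) - LinearMap.comp deph Φ)} with hAdef
  have hA_bdd : BddBelow A := by
    refine ⟨0, ?_⟩
    rintro r ⟨Φ, _, _, rfl⟩
    exact hnonneg _ _ _
  -- the set on the right is nonempty
  have hB_ne : ∃ r, r ∈ {r : ℝ | ∃ Φ : Matrix (Fin b) (Fin b) ℂ →ₗ[ℂ] Matrix (Fin c) (Fin c) ℂ,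
        IsKrausChannel Φ ∧ IsDI Φ ∧
        r = nn (Fin b) (Fin c) (LinearMap.comp deph Θ - LinearMap.comp deph Φ)} := by
    refine ⟨_, LinearMap.comp deph (LinearMap.comp Θ deph), ?_, ?_, rfl⟩
    · exact isKrausChannel_deph.compKraus (hΘ.compKraus isKrausChannel_deph)
    · apply LinearMap.ext; intro ρ
      simp only [LinearMap.comp_apply, deph_deph_apply]
  refine le_csInf hB_ne ?_
  rintro r ⟨Φ, hΦK, hΦDI, rfl⟩
  -- the candidate channel Φt ∘ Φ
  have hKcomp : IsKrausChannel (LinearMap.comp Φt Φ) := hΦt.compKraus hΦK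
  have hDIcomp : IsDI (LinearMap.comp Φt Φ) := by
    apply LinearMap.ext; intro ρ
    simp only [LinearMap.comp_apply]
    rw [hΦtDI.apply' (Φ ρ), hΦDI.apply' ρ, ← hΦtDI.apply' (Φ (deph ρ))]
  -- key factorization
  have hfact : LinearMap.comp deph (LinearMap.comp Φt Θ)
      - LinearMap.comp deph (LinearMap.comp Φt Φ)
      = LinearMap.comp (LinearMap.comp deph Φt)
        (LinearMap.comp deph Θ - LinearMap.comp deph Φ) := by
    apply LinearMap.ext; intro ρ
    simp only [LinearMap.sub_apply, LinearMap.comp_apply, map_sub]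
    rw [← hΦtDI.apply' (Θ ρ), ← hΦtDI.apply' (Φ ρ)]
  have hmem : nn (Fin b) (Fin d) (LinearMap.comp deph (LinearMap.comp Φt Θ)
      - LinearMap.comp deph (LinearMap.comp Φt Φ)) ∈ A := by
    exact ⟨LinearMap.comp Φt Φ, hKcomp, hDIcomp, rfl⟩
  refine le_trans (csInf_le hA_bdd hmem) ?_
  rw [hfact]
  have h1 : nn (Fin c) (Fin d) (LinearMap.comp deph Φt) ≤ 1 := by
    apply hDIbound
    · exact isKrausChannel_deph.compKraus hΦt
    · apply LinearMap.ext; intro ρ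
      simp only [LinearMap.comp_apply, deph_deph_apply]
      exact hΦtDI.apply' ρ
  calc nn (Fin b) (Fin d) (LinearMap.comp (LinearMap.comp deph Φt)
        (LinearMap.comp deph Θ - LinearMap.comp deph Φ))
      ≤ nn (Fin c) (Fin d) (LinearMap.comp deph Φt)
        * nn (Fin b) (Fin c) (LinearMap.comp deph Θ - LinearMap.comp deph Φ) := hcomp _ _ _ _ _
    _ ≤ 1 * nn (Fin b) (Fin c) (LinearMap.comp deph Θ - LinearMap.comp deph Φ) :=
        mul_le_mul_of_nonneg_right h1 (hnonneg _ _ _)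
    _ = _ := one_mul _
end

section
/- If a quantum channel $\Theta$ can be simulated by a detection-incoherent channel $\Phi$ together with consumption of a fixed ancilla state $\rho$, i.e. $\Theta(\sigma)=\Phi(\sigma\otimes\rho)$ for all states $\sigma$, then $\Theta$ is itself detection-incoherent. Hence no coherence-detecting channel can be simulated by a detection-incoherent channel plus any fixed resource state. -/
open Matrix
open scoped ComplexOrder
open scoped Kronecker

def IsDensity {ι : Type} [Fintype ι] [DecidableEq ι] (ρ : Matrix ι ι ℂ) : Prop :=
  ρ.PosSemidef ∧ ρ.trace = 1


section aux
variable {ι τ : Type} [Fintype ι] [DecidableEq ι] [Fintype τ] [DecidableEq τ]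

lemma deph_idem (A : Matrix ι ι ℂ) : deph (deph A) = deph A := by
  ext i j
  by_cases h : i = j <;> simp [deph, Matrix.diagonal_apply, h]

lemma deph_kron (A : Matrix ι ι ℂ) (B : Matrix τ τ ℂ) :
    deph (A ⊗ₖ B) = (deph A) ⊗ₖ (deph B) := by
  ext ⟨i, t⟩ ⟨j, s⟩
  by_cases h1 : i = j <;> by_cases h2 : t = s <;>
    simp [deph, Matrix.diagonal_apply, Matrix.kroneckerMap_apply, h1, h2, Prod.ext_iff]

lemma outer_density (v : ι → ℂ) (c : ℝ) (hc : 0 ≤ c)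
    (htr : (c : ℂ) * ∑ k, v k * star (v k) = 1) :
    IsDensity ((c : ℂ) • Matrix.vecMulVec v (star v)) := by
  refine ⟨Matrix.PosSemidef.of_dotProduct_mulVec_nonneg ?_ ?_, ?_⟩
  · ext i j
    simp only [Matrix.conjTranspose_apply, Matrix.smul_apply, Matrix.vecMulVec_apply,
      Pi.star_apply, star_mul', star_star, smul_eq_mul, Complex.star_def, _root_.map_mul,
      Complex.conj_ofReal, Complex.conj_conj]
    ring
  · intro x
    have key : star x ⬝ᵥ (((c : ℂ) • Matrix.vecMulVec v (star v)) *ᵥ x)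
        = (c : ℂ) * (star (star v ⬝ᵥ x) * (star v ⬝ᵥ x)) := by
      simp only [dotProduct, Matrix.mulVec, Matrix.smul_apply, Matrix.vecMulVec_apply,
        Pi.star_apply, smul_eq_mul, dotProduct, star_sum, star_mul', star_star,
        Finset.mul_sum, Finset.sum_mul]
      rw [Finset.sum_comm]
      refine Finset.sum_congr rfl fun i _ => Finset.sum_congr rfl fun j _ => ?_
      ring
    rw [key]
    exact mul_nonneg (Complex.zero_le_real.mpr hc)
      (star_mul_self_nonneg _)
  · rw [Matrix.trace_smul]
    simpa [Matrix.trace, Matrix.diag, Matrix.vecMulVec_apply, smul_eq_mul] using htr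

end aux


section dec
variable {ι : Type} [Fintype ι] [DecidableEq ι]

lemma star_single (i : ι) (c : ℂ) :
    star (Pi.single i c : ι → ℂ) = Pi.single i (star c) := by
  ext k
  by_cases h : k = i <;> simp [Pi.single_apply, h, eq_comm]

lemma dens_ii (i : ι) : IsDensity (Matrix.single i i (1 : ℂ)) := by
  have h : Matrix.single i i (1 : ℂ)
      = ((1 : ℝ) : ℂ) • Matrix.vecMulVec (Pi.single i 1) (star (Pi.single i (1 : ℂ))) := by
    ext a b
    by_cases h1 : i = a <;> by_cases h2 : i = b <;>
      simp [Matrix.single, Matrix.vecMulVec_apply, Pi.single_apply, star_single,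
        h1, h2, eq_comm]
  rw [h]
  refine outer_density _ _ zero_le_one ?_
  simp [Pi.single_apply, star_single]

lemma dens_v (i j : ι) (hij : i ≠ j) (c : ℂ) (hc : star c * c = 1) :
    IsDensity (((1/2 : ℝ) : ℂ) •
      Matrix.vecMulVec ((Pi.single i 1 + Pi.single j c : ι → ℂ))
        (star (Pi.single i 1 + Pi.single j c : ι → ℂ))) := by
  refine outer_density _ _ (by norm_num) ?_
  have key : ∑ k, ((Pi.single i 1 + Pi.single j c : ι → ℂ)) k
        * star (((Pi.single i 1 + Pi.single j c : ι → ℂ)) k) = 2 := by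
    have h1 : ∀ k, ((Pi.single i 1 + Pi.single j c : ι → ℂ)) k
          * star (((Pi.single i 1 + Pi.single j c : ι → ℂ)) k)
        = (if i = k then 1 else 0) + (if j = k then c * star c else 0) := by
      intro k
      by_cases h1 : k = i
      · subst h1
        simp [Pi.single_apply, (Ne.symm hij), hij]
      · by_cases h2 : k = j
        · subst h2
          simp [Pi.single_apply, hij, Ne.symm hij, Ne.symm (Ne.intro h1)]
        · simp [Pi.single_apply, Ne.symm (Ne.intro h1), Ne.symm (Ne.intro h2)]
    rw [Finset.sum_congr rfl fun k _ => h1 k, Finset.sum_add_distrib]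
    have hc' : c * (starRingEnd ℂ) c = 1 := by
      rw [mul_comm]; exact hc
    simp [Finset.sum_ite_eq, hc']
    norm_num
  rw [key]
  norm_num

end dec

section dec2
variable {ι : Type} [Fintype ι] [DecidableEq ι]

lemma stdBasis_decomp (i j : ι) (hij : i ≠ j) :
    Matrix.single i j (1 : ℂ)
      = ((1/2 : ℝ) : ℂ) • Matrix.vecMulVec (Pi.single i 1 + Pi.single j 1 : ι → ℂ)
          (star (Pi.single i 1 + Pi.single j 1 : ι → ℂ))
        + Complex.I • (((1/2 : ℝ) : ℂ) •
            Matrix.vecMulVec (Pi.single i 1 + Pi.single j Complex.I : ι → ℂ)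
              (star (Pi.single i 1 + Pi.single j Complex.I : ι → ℂ)))
        + (-((1 + Complex.I)/2)) •
            (Matrix.single i i (1 : ℂ) + Matrix.single j j (1 : ℂ)) := by
  ext a b
  by_cases h1 : i = a <;> by_cases h2 : j = b <;> by_cases h3 : i = b <;> by_cases h4 : j = a <;>
    simp_all [Matrix.single, Matrix.vecMulVec_apply, Pi.single_apply, eq_comm] <;>
    ring_nf <;> simp [Complex.I_sq] <;> ring_nf
end dec2

theorem stmt16 {ι κ τ : Type}
    [Fintype ι] [DecidableEq ι] [Fintype κ] [DecidableEq κ] [Fintype τ] [DecidableEq τ]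
    (Φ : Matrix (ι × τ) (ι × τ) ℂ →ₗ[ℂ] Matrix κ κ ℂ)
    (hΦc : IsKrausChannel Φ) (hΦ : IsDI Φ)
    (ρ : Matrix τ τ ℂ) (hρ : IsDensity ρ)
    (Θ : Matrix ι ι ℂ →ₗ[ℂ] Matrix κ κ ℂ) (hΘc : IsKrausChannel Θ)
    (hsim : ∀ σ : Matrix ι ι ℂ, IsDensity σ →
      Θ σ = Φ (Matrix.kroneckerMap (· * ·) σ ρ)) :
    IsDI Θ := by
  classical
  let K : Matrix ι ι ℂ →ₗ[ℂ] Matrix (ι × τ) (ι × τ) ℂ :=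
    { toFun := fun σ => σ ⊗ₖ ρ
      map_add' := fun a b => Matrix.add_kronecker a b ρ
      map_smul' := fun c a => Matrix.smul_kronecker c a ρ }
  have hK : ∀ x : Matrix ι ι ℂ, K x = x ⊗ₖ ρ := fun _ => rfl
  have hbasis : ∀ p : ι × ι,
      Θ ((Matrix.stdBasis ℂ ι ι) p) = (Φ.comp K) ((Matrix.stdBasis ℂ ι ι) p) := by
    rintro ⟨i, j⟩
    rw [Matrix.stdBasis_eq_single]
    show Θ _ = Φ (K _)
    by_cases hij : i = j
    · subst hij
      rw [hsim _ (dens_ii i), hK]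
    · have half : ((1/2 : ℝ) : ℂ) ≠ 0 := by norm_num
      have hvv : ∀ c : ℂ, star c * c = 1 →
          Θ (Matrix.vecMulVec (Pi.single i 1 + Pi.single j c : ι → ℂ)
              (star (Pi.single i 1 + Pi.single j c : ι → ℂ)))
            = Φ ((Matrix.vecMulVec (Pi.single i 1 + Pi.single j c : ι → ℂ)
              (star (Pi.single i 1 + Pi.single j c : ι → ℂ))) ⊗ₖ ρ) := by
        intro c hc
        apply smul_right_injective _ half
        show ((1/2 : ℝ) : ℂ) • _ = ((1/2 : ℝ) : ℂ) • _
        rw [← LinearMap.map_smul, ← LinearMap.map_smul, ← Matrix.smul_kronecker]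
        exact hsim _ (dens_v i j hij c hc)
      rw [stdBasis_decomp i j hij]
      simp only [map_add, LinearMap.map_smul]
      rw [hvv 1 (by norm_num), hvv Complex.I (by simp),
          hsim _ (dens_ii i), hsim _ (dens_ii j)]
      simp only [hK]
  have hΘK : Θ = Φ.comp K := Module.Basis.ext (Matrix.stdBasis ℂ ι ι) hbasis
  have hsim' : ∀ σ : Matrix ι ι ℂ, Θ σ = Φ (σ ⊗ₖ ρ) := fun σ => by rw [hΘK]; rfl
  unfold IsDI
  ext σ
  simp only [LinearMap.comp_apply]
  rw [hsim' σ, hsim' (deph σ)]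
  have h1 := LinearMap.congr_fun hΦ (σ ⊗ₖ ρ)
  have h2 := LinearMap.congr_fun hΦ ((deph σ) ⊗ₖ ρ)
  simp only [LinearMap.comp_apply] at h1 h2
  rw [h1, h2]
  simp only [deph_kron, deph_idem]
end

section
/- A Choi matrix $J$ on $\mathbb{C}^m\otimes\mathbb{C}^n$ corresponds to a detection-incoherent channel if and only if $J\geq 0$, $\mathrm{tr}_B(J)=\mathbb{1}_A$ (trace over the first/output factor), and $(\Delta_B\otimes\mathbb{1}_A)J = \Delta_{BA}J$, where $\Delta_{BA}=\Delta_B\otimes\Delta_A$. -/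
open Matrix
open scoped ComplexOrder

noncomputable def choiMap {n m : ℕ} (J : Matrix (Fin m × Fin n) (Fin m × Fin n) ℂ) :
    Matrix (Fin n) (Fin n) ℂ →ₗ[ℂ] Matrix (Fin m) (Fin m) ℂ where
  toFun ρ := Matrix.of fun k l => ∑ i, ∑ j, ρ i j * J (k, i) (l, j)
  map_add' ρ σ := by
    ext k l
    simp [add_mul, Finset.sum_add_distrib]
  map_smul' c ρ := by
    ext k l
    simp [Finset.mul_sum, mul_assoc]

lemma choiMap_apply {n m : ℕ} (J : Matrix (Fin m × Fin n) (Fin m × Fin n) ℂ)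
    (ρ : Matrix (Fin n) (Fin n) ℂ) (k l : Fin m) :
    choiMap J ρ k l = ∑ i, ∑ j, ρ i j * J (k, i) (l, j) := rfl

lemma tripleswap {A B C : Type*} [Fintype A] [Fintype B] [Fintype C] (f : A → B → C → ℂ) :
    ∑ a, ∑ b, ∑ c, f a b c = ∑ c, ∑ b, ∑ a, f a b c :=
  calc ∑ a, ∑ b, ∑ c, f a b c
      = ∑ a, ∑ c, ∑ b, f a b c := Finset.sum_congr rfl fun _ _ => Finset.sum_comm
    _ = ∑ c, ∑ a, ∑ b, f a b c := Finset.sum_comm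
    _ = ∑ c, ∑ b, ∑ a, f a b c := Finset.sum_congr rfl fun _ _ => Finset.sum_comm

theorem stmt17 {n m : ℕ} (J : Matrix (Fin m × Fin n) (Fin m × Fin n) ℂ) :
    (∃ Θ : Matrix (Fin n) (Fin n) ℂ →ₗ[ℂ] Matrix (Fin m) (Fin m) ℂ,
        IsKrausChannel Θ ∧ IsDI Θ ∧
        J = ∑ i : Fin n, ∑ j : Fin n,
          Matrix.kroneckerMap (· * ·) (Θ (Matrix.single i j 1))
            (Matrix.single i j (1 : ℂ))) ↔
    (J.PosSemidef ∧
      (Matrix.of fun a b : Fin n => ∑ k : Fin m, J (k, a) (k, b))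
        = (1 : Matrix (Fin n) (Fin n) ℂ) ∧
      (Matrix.of fun p q : Fin m × Fin n => if p.1 = q.1 then J p q else 0)
        = Matrix.diagonal fun p => J p p) := by
  constructor
  · rintro ⟨Θ, ⟨N, K, hK1, hK2⟩, hDI, rfl⟩
    set J : Matrix (Fin m × Fin n) (Fin m × Fin n) ℂ :=
      ∑ i : Fin n, ∑ j : Fin n,
        Matrix.kroneckerMap (· * ·) (Θ (Matrix.single i j 1))
          (Matrix.single i j (1 : ℂ)) with hJdef
    have hent : ∀ (k l : Fin m) (i j : Fin n),
        J (k, i) (l, j) = Θ (Matrix.single i j 1) k l := by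
      intro k l i j
      rw [hJdef]
      simp [Matrix.sum_apply, Matrix.kroneckerMap_apply, Matrix.single, ite_and]
    have hKE : ∀ (i j : Fin n) (k l : Fin m),
        Θ (Matrix.single i j 1) k l = ∑ t, K t k i * star (K t l j) := by
      intro i j k l
      rw [hK1]
      simp [Matrix.sum_apply, Matrix.mul_apply, Matrix.single, ite_and,
        Matrix.conjTranspose_apply, Finset.sum_ite_eq]
    refine ⟨?_, ?_, ?_⟩
    · -- PSD
      have hBJ : J = (Matrix.of fun (t : Fin N) (p : Fin m × Fin n) => star (K t p.1 p.2))ᴴ *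
          (Matrix.of fun (t : Fin N) (p : Fin m × Fin n) => star (K t p.1 p.2)) := by
        ext ⟨k, i⟩ ⟨l, j⟩
        rw [hent, hKE]
        simp [Matrix.mul_apply, Matrix.conjTranspose_apply]
      rw [hBJ]
      exact Matrix.posSemidef_conjTranspose_mul_self _
    · -- trace condition
      ext a b
      have h2 : ∑ t, ∑ k, star (K t k a) * K t k b = (1 : Matrix (Fin n) (Fin n) ℂ) a b := by
        have := congrFun (congrFun hK2 a) b
        simpa [Matrix.sum_apply, Matrix.mul_apply, Matrix.conjTranspose_apply] using this
      have h3 : ∑ k, J (k, a) (k, b) = ∑ t, ∑ k, K t k a * star (K t k b) := by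
        rw [Finset.sum_comm]
        refine Finset.sum_congr rfl fun k _ => ?_
        rw [hent, hKE]
      have h4 : ∑ t, ∑ k, K t k a * star (K t k b)
          = star (∑ t, ∑ k, star (K t k a) * K t k b) := by
        rw [star_sum]
        refine Finset.sum_congr rfl fun t _ => ?_
        rw [star_sum]
        refine Finset.sum_congr rfl fun k _ => ?_
        simp [mul_comm]
      show ∑ k, J (k, a) (k, b) = (1 : Matrix (Fin n) (Fin n) ℂ) a b
      rw [h3, h4, h2]
      simp [Matrix.one_apply, apply_ite (star : ℂ → ℂ)]
    · -- DI condition on J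
      have hdi : ∀ (k : Fin m) (i j : Fin n), i ≠ j → J (k, i) (k, j) = 0 := by
        intro k i j hij
        have h := congrFun (congrFun
          (LinearMap.congr_fun hDI (Matrix.single i j (1:ℂ))) k) k
        have hdz : deph (Matrix.single i j (1:ℂ)) = 0 := by
          ext a b
          simp only [deph_apply, Matrix.single, Matrix.of_apply, Matrix.zero_apply]
          split_ifs with h1 h2
          · exact absurd (h2.1.trans h2.2.symm) hij
          · rfl
          · rfl
        simp only [LinearMap.comp_apply, hdz, map_zero, deph_apply] at h
        simp only [if_pos rfl, Matrix.zero_apply] at h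
        rw [hent]
        exact h
      ext ⟨k, i⟩ ⟨l, j⟩
      simp only [Matrix.of_apply, Matrix.diagonal_apply]
      by_cases hkl : k = l
      · subst hkl
        by_cases hij : i = j
        · subst hij; simp
        · simp [hij, Prod.ext_iff, hdi k i j hij]
      · simp [hkl, Prod.ext_iff]
  · rintro ⟨hP, hT, hD⟩
    have hD' : ∀ (k : Fin m) (i j : Fin n), i ≠ j → J (k, i) (k, j) = 0 := by
      intro k i j hij
      have h := congrFun (congrFun hD (k, i)) (k, j)
      simp only [Matrix.of_apply, Matrix.diagonal_apply] at h
      rw [if_neg (show (k, i) ≠ (k, j) by simp [Prod.ext_iff, hij])] at h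
      simpa using h
    obtain ⟨B, hB⟩ : ∃ B : Matrix (Fin m × Fin n) (Fin m × Fin n) ℂ, J = Bᴴ * B := by
      open scoped MatrixOrder Matrix.Norms.L2Operator in
      exact CStarAlgebra.nonneg_iff_eq_star_mul_self.mp hP.nonneg
    have hJB : ∀ p q, J p q = ∑ t, star (B t p) * B t q := by
      intro p q
      rw [hB]
      simp [Matrix.mul_apply, Matrix.conjTranspose_apply]
    have hcs : ∀ (i j : Fin n) (k l : Fin m),
        choiMap J (Matrix.single i j 1) k l = J (k, i) (l, j) := by
      intro i j k l
      rw [choiMap_apply]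
      simp [Matrix.single, ite_and]
    refine ⟨choiMap J,
      ⟨m * n, fun s => Matrix.of fun k i => star (B ((finProdFinEquiv (m := m) (n := n)).symm s) (k, i)),
        ?_, ?_⟩, ?_, ?_⟩
    · -- Kraus representation
      intro ρ
      ext k l
      have hre := Equiv.sum_comp ((finProdFinEquiv (m := m) (n := n)).symm)
        (fun t => ((Matrix.of fun k i => star (B t (k, i))) * ρ *
          ((Matrix.of fun k' i => star (B t (k', i))))ᴴ) k l)
      rw [Matrix.sum_apply, hre]
      rw [choiMap_apply]
      simp only [Matrix.mul_apply, Matrix.conjTranspose_apply, Matrix.of_apply, star_star,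
        Finset.sum_mul, Finset.mul_sum]
      -- LHS: ∑ i, ∑ j, ∑ t, ρ i j * (star (B t (k,i)) * B t (l,j))
      -- RHS: ∑ t, ∑ j, ∑ i, star (B t (k,i)) * ρ i j * B t (l,j)
      rw [tripleswap]
      refine Finset.sum_congr rfl fun i _ => Finset.sum_congr rfl fun j _ => ?_
      rw [hJB, Finset.mul_sum]
      exact Finset.sum_congr rfl fun t _ => by ring
    · -- trace preserving
      ext a b
      have hre := Equiv.sum_comp ((finProdFinEquiv (m := m) (n := n)).symm)
        (fun t => (((Matrix.of fun k i => star (B t (k, i))))ᴴ *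
          (Matrix.of fun k i => star (B t (k, i)))) a b)
      rw [Matrix.sum_apply, hre]
      have hTe := congrFun (congrFun hT b) a
      simp only [Matrix.of_apply] at hTe
      have h1 : ∑ t, (((Matrix.of fun k i => star (B t (k, i))))ᴴ *
          (Matrix.of fun k i => star (B t (k, i)))) a b = ∑ k, J (k, b) (k, a) := by
        simp only [Matrix.mul_apply, Matrix.conjTranspose_apply, Matrix.of_apply, star_star]
        rw [Finset.sum_comm]
        refine Finset.sum_congr rfl fun k _ => ?_
        rw [hJB]
        exact Finset.sum_congr rfl fun t _ => by ring
      rw [h1, hTe]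
      simp [Matrix.one_apply, eq_comm]
    · -- DI
      apply LinearMap.ext
      intro ρ
      ext k l
      simp only [LinearMap.comp_apply, deph_apply]
      by_cases hkl : k = l
      · subst hkl
        simp only [if_pos rfl]
        rw [choiMap_apply, choiMap_apply]
        refine Finset.sum_congr rfl fun i _ => ?_
        rw [Finset.sum_eq_single i, Finset.sum_eq_single i]
        · rw [deph_apply, if_pos rfl]
        · intro j _ hj
          rw [deph_apply, if_neg (Ne.symm hj), zero_mul]
        · intro h; exact absurd (Finset.mem_univ i) h
        · intro j _ hj
          rw [hD' k i j (Ne.symm hj), mul_zero]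
        · intro h; exact absurd (Finset.mem_univ i) h
      · simp [hkl]
    · -- Choi reconstruction
      ext ⟨k, i⟩ ⟨l, j⟩
      simp only [Matrix.sum_apply, Matrix.kroneckerMap_apply, hcs]
      simp [Matrix.single, ite_and]
end
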